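/- Let A be a Büchi automaton and cl(A) its closure. Then A and cl(A) recognize the same ω-language: L(A) = L(cl(A)). -/

import Mathlib

set_option linter.unusedVariables false

namespace Games

/-- A game arena: a directed graph whose vertices are partitioned between
Player 0 (`owner v = false`) and Player 1 (`owner v = true`). -/
structure GameGraph (V : Type*) where
  E : V → V → Prop
  owner : V → Bool

/-- An infinite path through the game graph. -/
def IsPlay {V : Type*} (G : GameGraph V) (ρ : ℕ → V) : Prop :=
  ∀ i, G.E (ρ i) (ρ (i + 1))

/-- A property of positions holds infinitely often. -/
def InfOften (p : ℕ → Prop) : Prop := ∀ n, ∃ m, n ≤ m ∧ p m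

/-- The set of elements occurring infinitely often in a sequence. -/
def InfSet {α : Type*} (ρ : ℕ → α) : Set α := {u | InfOften fun i => ρ i = u}

/-- Game simulation (Definition 1 of the paper): the game `(G, φ)` is simulated by the
game `(G', φ')` on the extended vertex set `S × V` with initial memory content `s0`. -/
structure IsSimulation {V S : Type*} (G : GameGraph V) (φ : (ℕ → V) → Prop)
    (G' : GameGraph (S × V)) (φ' : (ℕ → S × V) → Prop) (s0 : S) : Prop where
  owner_eq : ∀ (s : S) (v : V), G'.owner (s, v) = G.owner v
  edge_lift : ∀ (s : S) (v v' : V), G.E v v' → ∃ s', G'.E (s, v) (s', v')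
  mem_unique : ∀ (s : S) (v : V) (p₁ p₂ : S × V), G'.E (s, v) p₁ → G'.E (s, v) p₂ → p₁.1 = p₂.1
  edge_proj : ∀ (s s' : S) (v v' : V), G'.E (s, v) (s', v') → G.E v v'
  win_iff : ∀ ρ : ℕ → V, IsPlay G ρ → ∀ ρ' : ℕ → S × V,
      ρ' 0 = (s0, ρ 0) → (∀ i, (ρ' i).2 = ρ i) → IsPlay G' ρ' → (φ ρ ↔ φ' ρ')

/-- A play is consistent with the (history-dependent) strategy `f` of Player 0. -/
def StratConsistent {V : Type*} (G : GameGraph V) (f : List V → V → V) (ρ : ℕ → V) : Prop :=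
  ∀ i, G.owner (ρ i) = false → ρ (i + 1) = f (List.ofFn fun j : Fin i => ρ j) (ρ i)

/-- Player 0 has a strategy from `v` forcing every resulting play to satisfy `ψ`. -/
def ForcesFrom {V : Type*} (G : GameGraph V) (ψ : (ℕ → V) → Prop) (v : V) : Prop :=
  ∃ f : List V → V → V, (∀ (h : List V) (u : V), G.owner u = false → G.E u (f h u)) ∧
    ∀ ρ : ℕ → V, ρ 0 = v → IsPlay G ρ → StratConsistent G f ρ → ψ ρ

end Games
namespace Games

/-- A (nondeterministic) Büchi automaton. -/
structure BA (Q A : Type*) where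
  init : Q
  Tr : Q → A → Q → Prop
  final : Q → Prop

/-- Büchi acceptance: some run on `α` visits final states infinitely often. -/
def BAAccept {Q A : Type*} (M : BA Q A) (α : ℕ → A) : Prop :=
  ∃ ρ : ℕ → Q, ρ 0 = M.init ∧ (∀ i, M.Tr (ρ i) (α i) (ρ (i + 1))) ∧
    InfOften fun i => M.final (ρ i)

/-- The ω-language recognized by a Büchi automaton. -/
def BALang {Q A : Type*} (M : BA Q A) : Set (ℕ → A) := {α | BAAccept M α}

/-- Duplicator's run in the delayed simulation game, determined by a strategy `τ`
(a function of the history of letters and Spoiler states), Duplicator's start state `q'`,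
Spoiler's letters `α` and Spoiler's run `ρ`. -/
def dupRun {Q A : Type*} (τ : List (A × Q) → Q) (q' : Q) (α : ℕ → A) (ρ : ℕ → Q) : ℕ → Q
  | 0 => q'
  | i + 1 => τ ((List.range (i + 1)).map fun j => (α j, ρ (j + 1)))

/-- `q'` delayed simulates `q` (written `q ⪯_de q'`): Duplicator has a winning strategy
in the delayed simulation game `G_de(q, q')`: against every legal behaviour of Spoiler,
Duplicator's answers are legal and every final state visited by Spoiler at position `i`
is answered by a final state of Duplicator at some position `j ≥ i`. -/
def DelSim {Q A : Type*} (M : BA Q A) (q q' : Q) : Prop :=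
  ∃ τ : List (A × Q) → Q, ∀ (α : ℕ → A) (ρ : ℕ → Q), ρ 0 = q →
    (∀ i, M.Tr (ρ i) (α i) (ρ (i + 1))) →
    (∀ i, M.Tr (dupRun τ q' α ρ i) (α i) (dupRun τ q' α ρ (i + 1))) ∧
    (∀ i, M.final (ρ i) → ∃ j, i ≤ j ∧ M.final (dupRun τ q' α ρ j))

/-- Delayed simulation equivalence `q ≃_de q'`. -/
def DelSimEq {Q A : Type*} (M : BA Q A) (q q' : Q) : Prop :=
  DelSim M q q' ∧ DelSim M q' q

end Games
namespace Games

/-- The history visible to Duplicator in a bisimulation game: for each round the side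
chosen by Spoiler, the letter, and the state chosen by Spoiler. -/
def bisHist {Q A : Type*} (b : ℕ → Bool) (α : ℕ → A) (s : ℕ → Q) (i : ℕ) :
    List (Bool × A × Q) :=
  (List.range (i + 1)).map fun j => (b j, α j, s j)

/-- The run built on side `side` in a bisimulation game: in round `i` Spoiler extends
the run of side `b i` by the state `s i`, and Duplicator extends the other run
according to the strategy `τ`. -/
def bisRun {Q A : Type*} (τ : List (Bool × A × Q) → Q) (side : Bool) (q : Q)
    (b : ℕ → Bool) (α : ℕ → A) (s : ℕ → Q) : ℕ → Q
  | 0 => q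
  | i + 1 => if b i = side then s i else τ (bisHist b α s i)

/-- Delayed bisimulation `q ≈_de q'`: Duplicator has a winning strategy in the game where
in each round Spoiler chooses which of the two runs to extend (by a legal transition) and
Duplicator extends the other run with the same letter; every final state at position `i`
of either run must be answered by a final state at some position `j ≥ i` of the other run. -/
def DelBisim {Q A : Type*} (M : BA Q A) (q q' : Q) : Prop :=
  ∃ τ : List (Bool × A × Q) → Q, ∀ (b : ℕ → Bool) (α : ℕ → A) (s : ℕ → Q),
    (∀ i, (b i = false → M.Tr (bisRun τ false q b α s i) (α i) (s i)) ∧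
          (b i = true → M.Tr (bisRun τ true q' b α s i) (α i) (s i))) →
    (∀ i, M.Tr (bisRun τ false q b α s i) (α i) (bisRun τ false q b α s (i + 1)) ∧
          M.Tr (bisRun τ true q' b α s i) (α i) (bisRun τ true q' b α s (i + 1))) ∧
    (∀ i, (M.final (bisRun τ false q b α s i) →
              ∃ j, i ≤ j ∧ M.final (bisRun τ true q' b α s j)) ∧
          (M.final (bisRun τ true q' b α s i) →
              ∃ j, i ≤ j ∧ M.final (bisRun τ false q b α s j)))

/-- Direct bisimulation `q ≈_di q'`: as delayed bisimulation, but the two runs must agree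
on finality at every position. -/
def DirBisim {Q A : Type*} (M : BA Q A) (q q' : Q) : Prop :=
  ∃ τ : List (Bool × A × Q) → Q, ∀ (b : ℕ → Bool) (α : ℕ → A) (s : ℕ → Q),
    (∀ i, (b i = false → M.Tr (bisRun τ false q b α s i) (α i) (s i)) ∧
          (b i = true → M.Tr (bisRun τ true q' b α s i) (α i) (s i))) →
    (∀ i, M.Tr (bisRun τ false q b α s i) (α i) (bisRun τ false q b α s (i + 1)) ∧
          M.Tr (bisRun τ true q' b α s i) (α i) (bisRun τ true q' b α s (i + 1))) ∧
    (∀ i, M.final (bisRun τ false q b α s i) ↔ M.final (bisRun τ true q' b α s i))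

/-- The final states of the closure `cl(A)`: the least set containing the final states
and every state all of whose successors are already in the set. -/
inductive ClFin {Q A : Type*} (M : BA Q A) : Q → Prop
  | base (q : Q) : M.final q → ClFin M q
  | step (q : Q) : (∀ a q', M.Tr q a q' → ClFin M q') → ClFin M q

/-- The closure `cl(A)` of a Büchi automaton. -/
def clBA {Q A : Type*} (M : BA Q A) : BA Q A where
  init := M.init
  Tr := M.Tr
  final := ClFin M

end Games
namespace Games

/-- Every run starting in a `ClFin` state eventually visits a final state. -/
lemma clFin_run_final {Q A : Type*} (M : BA Q A) {q : Q} (h : ClFin M q) :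
    ∀ (α : ℕ → A) (ρ : ℕ → Q), ρ 0 = q → (∀ i, M.Tr (ρ i) (α i) (ρ (i + 1))) →
      ∃ i, M.final (ρ i) := by
  induction h with
  | base q hq => exact fun α ρ h0 _ => ⟨0, h0 ▸ hq⟩
  | step q hsucc ih =>
    intro α ρ h0 hTr
    have h1 : ClFin M (ρ 1) := hsucc (α 0) (ρ 1) (h0 ▸ hTr 0)
    obtain ⟨i, hi⟩ := ih (α 0) (ρ 1) (h0 ▸ hTr 0)
      (fun j => α (j + 1)) (fun j => ρ (j + 1)) rfl (fun j => hTr (j + 1))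
    exact ⟨i + 1, hi⟩

/-- A Büchi automaton and its closure recognize the same ω-language. -/
theorem closure_language {Q A : Type*} (M : BA Q A) :
    BALang M = BALang (clBA M) := by
  ext α
  constructor
  · rintro ⟨ρ, h0, hTr, hInf⟩
    exact ⟨ρ, h0, hTr, fun n => (hInf n).imp fun m ⟨hle, hf⟩ => ⟨hle, ClFin.base _ hf⟩⟩
  · rintro ⟨ρ, h0, hTr, hInf⟩
    refine ⟨ρ, h0, hTr, fun n => ?_⟩
    obtain ⟨m, hnm, hcl⟩ := hInf n
    obtain ⟨i, hi⟩ := clFin_run_final M hcl (fun j => α (m + j)) (fun j => ρ (m + j)) rfl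
      (fun j => by simpa [Nat.add_assoc, clBA] using hTr (m + j))
    exact ⟨m + i, le_trans hnm (Nat.le_add_right m i), hi⟩

end Games
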